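/- Let H be a non-negative almost increasing function on [0, R₀] (with constant K_H) and let F be a positive function on (0, R₀]. Suppose (1) there exist constants A, B, ε, β > 0 such that H(ρ) ≤ (A(ρ/R)^β + ε)H(R) + B·F(R) for all 0 < ρ ≤ R ≤ R₀, and (2) there exists γ ∈ (0, β) such that the function ρ ↦ ρ^γ / F(ρ) is almost increasing on (0, R₀] (with constant K). Then there exist ε₀ = ε₀(A, β, γ) > 0 and C = C(A, β, γ, K_H, K) > 0 such that if ε < ε₀, then H(ρ) ≤ C·(F(ρ)/F(R))·H(R) + C·B·F(ρ) for all 0 < ρ ≤ R ≤ R₀. -/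
import Mathlib


/-- A function `h` is *almost increasing* on a set `s` with constant `K ≥ 1` if
`h x ≤ K * h y` whenever `x ≤ y` in `s`. -/
def AlmostIncreasingOn (h : ℝ → ℝ) (s : Set ℝ) (K : ℝ) : Prop :=
  1 ≤ K ∧ ∀ ⦃x⦄, x ∈ s → ∀ ⦃y⦄, y ∈ s → x ≤ y → h x ≤ K * h y

private lemma geom_sum_le_inv_one_sub {r : ℝ} (h0 : 0 ≤ r) (h1 : r < 1) (n : ℕ) :
    ∑ i ∈ Finset.range n, r ^ i ≤ (1 - r)⁻¹ := by
  have hne : r ≠ 1 := ne_of_lt h1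
  rw [geom_sum_eq hne, div_le_iff_of_neg (by linarith : r - 1 < 0)]
  have h2 : (1 - r)⁻¹ * (r - 1) = -1 := by
    rw [inv_mul_eq_div, div_eq_iff (by linarith : (1:ℝ) - r ≠ 0)]; ring
  linarith [pow_nonneg h0 n]

/-- Comparison via almost increasing of `ρ ↦ ρ^γ / F ρ`. -/
private lemma F_comp {γ K : ℝ} {F : ℝ → ℝ} {s : Set ℝ} (hF : ∀ ρ ∈ s, 0 < F ρ)
    (hai : AlmostIncreasingOn (fun ρ => ρ ^ γ / F ρ) s K)
    {x y : ℝ} (hx : x ∈ s) (hy : y ∈ s) (hxy : x ≤ y) :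
    F y * x ^ γ ≤ K * y ^ γ * F x := by
  have h := hai.2 hx hy hxy
  simp only at h
  have hFx := hF x hx
  have hFy := hF y hy
  rw [div_le_iff₀ hFx] at h
  calc F y * x ^ γ ≤ F y * (K * (y ^ γ / F y) * F x) :=
        mul_le_mul_of_nonneg_left h hFy.le
    _ = K * y ^ γ * F x := by field_simp

set_option maxHeartbeats 2000000 in
/-- **Iteration lemma.** Let `H` be a non-negative almost increasing function on `[0, R₀]`
(with constant `K_H`) and `F` a positive function on `(0, R₀]`.  If
`H ρ ≤ (A (ρ/R)^β + ε) H R + B F R` for `0 < ρ ≤ R ≤ R₀`, and `ρ ↦ ρ^γ / F ρ` is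
almost increasing on `(0, R₀]` (with constant `K`) for some `γ ∈ (0, β)`, then there exist
`ε₀ = ε₀(A, β, γ) > 0` and `C = C(A, β, γ, K_H, K) > 0` such that whenever `ε < ε₀`,
`H ρ ≤ C (F ρ / F R) H R + C B F ρ` for all `0 < ρ ≤ R ≤ R₀`. -/
theorem almost_increasing_iteration
    (A β γ : ℝ) (hA : 0 < A) (hβ : 0 < β) (hγ0 : 0 < γ) (hγβ : γ < β) :
    ∃ ε₀ > 0, ∀ K_H K : ℝ, 1 ≤ K_H → 1 ≤ K → ∃ C > 0,
      ∀ (R₀ : ℝ) (H F : ℝ → ℝ) (B ε : ℝ), 0 < R₀ → 0 < B → 0 < ε →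
        (∀ ρ ∈ Set.Icc (0 : ℝ) R₀, 0 ≤ H ρ) →
        AlmostIncreasingOn H (Set.Icc 0 R₀) K_H →
        (∀ ρ ∈ Set.Ioc (0 : ℝ) R₀, 0 < F ρ) →
        (∀ ρ R : ℝ, 0 < ρ → ρ ≤ R → R ≤ R₀ →
          H ρ ≤ (A * (ρ / R) ^ β + ε) * H R + B * F R) →
        AlmostIncreasingOn (fun ρ => ρ ^ γ / F ρ) (Set.Ioc 0 R₀) K →
        ε < ε₀ →
        ∀ ρ R : ℝ, 0 < ρ → ρ ≤ R → R ≤ R₀ →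
          H ρ ≤ C * (F ρ / F R) * H R + C * B * F ρ := by
  -- intermediate exponent
  set γ₁ : ℝ := (γ + β) / 2 with hγ₁def
  have hγγ₁ : γ < γ₁ := by rw [hγ₁def]; linarith
  have hγ₁β : γ₁ < β := by rw [hγ₁def]; linarith
  have hγ₁0 : 0 < γ₁ := lt_trans hγ0 hγγ₁
  -- choose the scale σ
  set σ : ℝ := min (1/2) ((2 * A) ^ (-(β - γ₁)⁻¹)) with hσdef
  have h2A : (0:ℝ) < 2 * A := by linarith
  have hσ0 : 0 < σ := lt_min (by norm_num) (Real.rpow_pos_of_pos h2A _)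
  have hσ1 : σ < 1 := lt_of_le_of_lt (min_le_left _ _) (by norm_num)
  have hβγ₁ : 0 < β - γ₁ := by linarith
  -- key smallness: 2 * A * σ ^ β ≤ σ ^ γ₁
  have hkey : 2 * A * σ ^ β ≤ σ ^ γ₁ := by
    have h1 : σ ^ (β - γ₁) ≤ (2 * A)⁻¹ := by
      have h := Real.rpow_le_rpow hσ0.le
        (min_le_right (1/2) ((2 * A) ^ (-(β - γ₁)⁻¹))) hβγ₁.le
      rwa [← Real.rpow_mul h2A.le, neg_mul, inv_mul_cancel₀ (ne_of_gt hβγ₁),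
        Real.rpow_neg_one] at h
    have h2 : σ ^ β = σ ^ (β - γ₁) * σ ^ γ₁ := by
      rw [← Real.rpow_add hσ0]; ring_nf
    have hσγ₁ : 0 < σ ^ γ₁ := Real.rpow_pos_of_pos hσ0 _
    calc 2 * A * σ ^ β = 2 * A * (σ ^ (β - γ₁) * σ ^ γ₁) := by rw [h2]
      _ ≤ 2 * A * ((2 * A)⁻¹ * σ ^ γ₁) := by
          apply mul_le_mul_of_nonneg_left _ h2A.le
          exact mul_le_mul_of_nonneg_right h1 hσγ₁.le
      _ = σ ^ γ₁ := by
          rw [← mul_assoc, mul_inv_cancel₀ (ne_of_gt h2A), one_mul]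
  refine ⟨A * σ ^ β, by positivity, ?_⟩
  intro K_H K hKH hK
  set a : ℝ := σ ^ γ₁ with hadef
  set b : ℝ := σ ^ γ with hbdef
  have ha0 : 0 < a := Real.rpow_pos_of_pos hσ0 _
  have hb0 : 0 < b := Real.rpow_pos_of_pos hσ0 _
  have hab : a < b := Real.rpow_lt_rpow_of_exponent_gt hσ0 hσ1 hγγ₁
  have hb1 : b < 1 := Real.rpow_lt_one hσ0.le hσ1 hγ0
  set M : ℝ := K / (b - a) with hMdef
  have hM0 : 0 < M := div_pos (by linarith) (by linarith)
  have hC0 : 0 < K_H * K * b⁻¹ * (K + M) := by positivity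
  clear_value γ₁ σ a b M
  refine ⟨K_H * K * b⁻¹ * (K + M), hC0, ?_⟩
  intro R₀ H F B ε hR₀ hB hε hH0 hHai hF hiter hFai hεε₀ ρ R hρ hρR hRR₀
  have hR : 0 < R := lt_of_lt_of_le hρ hρR
  -- powers of σ times R lie in (0, R₀]
  have hmem : ∀ k : ℕ, σ ^ k * R ∈ Set.Ioc (0:ℝ) R₀ := by
    intro k
    refine ⟨by positivity, ?_⟩
    calc σ ^ k * R ≤ 1 * R :=
          mul_le_mul_of_nonneg_right (pow_le_one₀ hσ0.le hσ1.le) hR.le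
      _ = R := one_mul R
      _ ≤ R₀ := hRR₀
  have hmemIcc : ∀ k : ℕ, σ ^ k * R ∈ Set.Icc (0:ℝ) R₀ :=
    fun k => ⟨(hmem k).1.le, (hmem k).2⟩
  -- (σ^m * R)^γ = b^m * R^γ
  have hpow : ∀ m : ℕ, (σ ^ m * R) ^ γ = b ^ m * R ^ γ := by
    intro m
    rw [Real.mul_rpow (by positivity) hR.le, hbdef, ← Real.rpow_natCast σ m,
      ← Real.rpow_mul hσ0.le, mul_comm (m:ℝ) γ, Real.rpow_mul hσ0.le,
      Real.rpow_natCast]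
  -- basic iteration step
  have hbasic : ∀ s : ℝ, 0 < s → s ≤ R₀ → H (σ * s) ≤ a * H s + B * F s := by
    intro s hs hsR₀
    have h1 := hiter (σ * s) s (by positivity) (by nlinarith) hsR₀
    have h2 : (σ * s / s) = σ := by
      rw [mul_div_assoc, div_self (ne_of_gt hs), mul_one]
    rw [h2] at h1
    have hHs : 0 ≤ H s := hH0 s ⟨hs.le, hsR₀⟩
    have h3 : A * σ ^ β + ε ≤ a := by
      have : A * σ ^ β + ε ≤ 2 * A * σ ^ β := by linarith
      linarith [hkey]
    nlinarith [mul_le_mul_of_nonneg_right h3 hHs]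
  -- main induction
  have hmain : ∀ k : ℕ, H (σ ^ k * R) ≤ a ^ k * H R +
      B * ∑ j ∈ Finset.range k, a ^ j * F (σ ^ (k - 1 - j) * R) := by
    intro k
    induction k with
    | zero => simp
    | succ k ih =>
      have hstep := hbasic (σ ^ k * R) (hmem k).1 (hmem k).2
      rw [← mul_assoc, ← pow_succ'] at hstep
      have h4 : H (σ ^ (k+1) * R) ≤ a * (a ^ k * H R +
          B * ∑ j ∈ Finset.range k, a ^ j * F (σ ^ (k - 1 - j) * R)) + B * F (σ ^ k * R) :=
        le_trans hstep (by nlinarith [mul_le_mul_of_nonneg_left ih ha0.le])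
      refine le_trans h4 (le_of_eq ?_)
      rw [Finset.sum_range_succ' (fun j => a ^ j * F (σ ^ (k + 1 - 1 - j) * R)) k]
      simp only [pow_zero, one_mul, Nat.add_sub_cancel, Nat.sub_zero]
      have hre : ∀ j ∈ Finset.range k,
          a ^ (j+1) * F (σ ^ (k - (j+1)) * R) = a * (a ^ j * F (σ ^ (k - 1 - j) * R)) := by
        intro j hj
        have h5 : k - (j+1) = k - 1 - j := by omega
        rw [h5, pow_succ]; ring
      rw [Finset.sum_congr rfl hre, ← Finset.mul_sum]
      ring
  -- bound each term of the sum
  have hterm : ∀ k : ℕ, ∀ j ∈ Finset.range k,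
      a ^ j * F (σ ^ (k - 1 - j) * R) ≤ K * b⁻¹ * (a/b) ^ j * F (σ ^ k * R) := by
    intro k j hj
    have hjk : j < k := Finset.mem_range.mp hj
    have hle : σ ^ k * R ≤ σ ^ (k - 1 - j) * R :=
      mul_le_mul_of_nonneg_right (pow_le_pow_of_le_one hσ0.le hσ1.le (by omega)) hR.le
    have hcmp := F_comp hF hFai (hmem k) (hmem (k - 1 - j)) hle
    rw [hpow, hpow] at hcmp
    have hRγ : 0 < R ^ γ := Real.rpow_pos_of_pos hR _
    have hsplit : b ^ k = b ^ (k - 1 - j) * b ^ (j + 1) := by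
      rw [← pow_add]; congr 1; omega
    have hFk := hF _ (hmem k)
    have hFj := hF _ (hmem (k - 1 - j))
    have hcmp2 : F (σ ^ (k - 1 - j) * R) * b ^ (j+1) ≤ K * F (σ ^ k * R) := by
      have hpos : (0:ℝ) < b ^ (k - 1 - j) * R ^ γ := by positivity
      apply le_of_mul_le_mul_right _ hpos
      calc F (σ ^ (k - 1 - j) * R) * b ^ (j+1) * (b ^ (k - 1 - j) * R ^ γ)
          = F (σ ^ (k - 1 - j) * R) * (b ^ k * R ^ γ) := by rw [hsplit]; ring
        _ ≤ K * (b ^ (k - 1 - j) * R ^ γ) * F (σ ^ k * R) := hcmp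
        _ = K * F (σ ^ k * R) * (b ^ (k - 1 - j) * R ^ γ) := by ring
    have hbj : (0:ℝ) < b ^ (j+1) := pow_pos hb0 _
    have hFj_le : F (σ ^ (k - 1 - j) * R) ≤ K * F (σ ^ k * R) / b ^ (j+1) := by
      rw [le_div_iff₀ hbj]; exact hcmp2
    calc a ^ j * F (σ ^ (k - 1 - j) * R) ≤ a ^ j * (K * F (σ ^ k * R) / b ^ (j+1)) :=
          mul_le_mul_of_nonneg_left hFj_le (pow_nonneg ha0.le j)
      _ = K * b⁻¹ * (a/b) ^ j * F (σ ^ k * R) := by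
          rw [div_pow, pow_succ, div_eq_mul_inv, div_eq_mul_inv, mul_inv]
          ring
  -- the summed bound
  have hsum : ∀ k : ℕ, ∑ j ∈ Finset.range k, a ^ j * F (σ ^ (k - 1 - j) * R)
      ≤ M * F (σ ^ k * R) := by
    intro k
    have hFk := hF _ (hmem k)
    have hr0 : (0:ℝ) ≤ a/b := by positivity
    have hr1 : a/b < 1 := (div_lt_one hb0).mpr hab
    calc ∑ j ∈ Finset.range k, a ^ j * F (σ ^ (k - 1 - j) * R)
        ≤ ∑ j ∈ Finset.range k, K * b⁻¹ * (a/b) ^ j * F (σ ^ k * R) :=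
          Finset.sum_le_sum (hterm k)
      _ = K * b⁻¹ * F (σ ^ k * R) * ∑ j ∈ Finset.range k, (a/b) ^ j := by
          rw [Finset.mul_sum]
          exact Finset.sum_congr rfl fun j _ => by ring
      _ ≤ K * b⁻¹ * F (σ ^ k * R) * (1 - a/b)⁻¹ := by
          apply mul_le_mul_of_nonneg_left (geom_sum_le_inv_one_sub hr0 hr1 k)
          positivity
      _ = M * F (σ ^ k * R) := by
          have hkey2 : b⁻¹ * (1 - a/b)⁻¹ = (b - a)⁻¹ := by
            rw [← mul_inv]
            congr 1
            rw [mul_sub, mul_one, mul_comm, sub_right_inj]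
            exact div_mul_cancel₀ a (ne_of_gt hb0)
          rw [hMdef, div_eq_mul_inv K (b - a), ← hkey2]
          ring
  -- scale comparison for the H R term
  have hRmem : R ∈ Set.Ioc (0:ℝ) R₀ := ⟨hR, hRR₀⟩
  have hFR := hF R hRmem
  have hak : ∀ k : ℕ, a ^ k * F R ≤ K * F (σ ^ k * R) := by
    intro k
    have hle : σ ^ k * R ≤ R := by
      calc σ ^ k * R ≤ 1 * R :=
            mul_le_mul_of_nonneg_right (pow_le_one₀ hσ0.le hσ1.le) hR.le
        _ = R := one_mul R
    have hcmp := F_comp hF hFai (hmem k) hRmem hle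
    rw [hpow] at hcmp
    have hRγ : 0 < R ^ γ := Real.rpow_pos_of_pos hR _
    have hb_le : b ^ k * F R ≤ K * F (σ ^ k * R) := by
      apply le_of_mul_le_mul_right _ hRγ
      calc b ^ k * F R * R ^ γ = F R * (b ^ k * R ^ γ) := by ring
        _ ≤ K * R ^ γ * F (σ ^ k * R) := hcmp
        _ = K * F (σ ^ k * R) * R ^ γ := by ring
    calc a ^ k * F R ≤ b ^ k * F R :=
          mul_le_mul_of_nonneg_right (pow_le_pow_left₀ ha0.le hab.le k) hFR.le
      _ ≤ K * F (σ ^ k * R) := hb_le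
  -- combined bound at the scales σ^k R
  have hHk : ∀ k : ℕ, H (σ ^ k * R) ≤ K * (F (σ ^ k * R) / F R) * H R
      + B * M * F (σ ^ k * R) := by
    intro k
    have hHR : 0 ≤ H R := hH0 R ⟨hR.le, hRR₀⟩
    have h1 : a ^ k ≤ K * F (σ ^ k * R) / F R := by
      rw [le_div_iff₀ hFR]
      exact hak k
    calc H (σ ^ k * R) ≤ a ^ k * H R +
          B * ∑ j ∈ Finset.range k, a ^ j * F (σ ^ (k - 1 - j) * R) := hmain k
      _ ≤ (K * F (σ ^ k * R) / F R) * H R + B * (M * F (σ ^ k * R)) := by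
          apply add_le_add
          · exact mul_le_mul_of_nonneg_right h1 hHR
          · exact mul_le_mul_of_nonneg_left (hsum k) hB.le
      _ = K * (F (σ ^ k * R) / F R) * H R + B * M * F (σ ^ k * R) := by ring
  -- choose the scale k with σ^(k+1) R < ρ ≤ σ^k R
  have hex : ∃ n : ℕ, σ ^ n * R < ρ := by
    obtain ⟨n, hn⟩ := exists_pow_lt_of_lt_one (div_pos hρ hR) hσ1
    exact ⟨n, by rwa [← lt_div_iff₀ hR]⟩
  set n := Nat.find hex with hndef
  have hn1 : σ ^ n * R < ρ := Nat.find_spec hex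
  have hn0 : n ≠ 0 := by
    intro h
    rw [h, pow_zero, one_mul] at hn1
    exact absurd hρR (not_le.mpr hn1)
  set k := n - 1 with hkdef
  have hkn : k < n := by omega
  have hk1 : ρ ≤ σ ^ k * R := not_lt.mp (Nat.find_min hex hkn)
  have hk2 : σ ^ (k+1) * R < ρ := by
    have : k + 1 = n := by omega
    rw [this]; exact hn1
  -- compare F at scale σ^k R with F ρ
  have hρmem : ρ ∈ Set.Ioc (0:ℝ) R₀ := ⟨hρ, hρR.trans hRR₀⟩
  have hFρ := hF ρ hρmem
  have hFk := hF _ (hmem k)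
  have hFkρ : F (σ ^ k * R) ≤ K * b⁻¹ * F ρ := by
    have hcmp := F_comp hF hFai hρmem (hmem k) hk1
    -- F (σ^k R) * ρ^γ ≤ K * (σ^k R)^γ * F ρ
    have hργ : 0 < ρ ^ γ := Real.rpow_pos_of_pos hρ _
    have hlt : σ ^ k * R ≤ ρ / σ := by
      rw [le_div_iff₀ hσ0]
      calc σ ^ k * R * σ = σ ^ (k+1) * R := by rw [pow_succ]; ring
        _ ≤ ρ := hk2.le
    have hsk : (σ ^ k * R) ^ γ ≤ b⁻¹ * ρ ^ γ := by
      calc (σ ^ k * R) ^ γ ≤ (ρ / σ) ^ γ :=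
            Real.rpow_le_rpow (by positivity) hlt hγ0.le
        _ = b⁻¹ * ρ ^ γ := by
            rw [Real.div_rpow hρ.le hσ0.le, hbdef, div_eq_mul_inv, mul_comm]
    apply le_of_mul_le_mul_right _ hργ
    calc F (σ ^ k * R) * ρ ^ γ ≤ K * (σ ^ k * R) ^ γ * F ρ := hcmp
      _ ≤ K * (b⁻¹ * ρ ^ γ) * F ρ := by
          apply mul_le_mul_of_nonneg_right _ hFρ.le
          exact mul_le_mul_of_nonneg_left hsk (by linarith)
      _ = K * b⁻¹ * F ρ * ρ ^ γ := by ring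
  -- almost increasing of H
  have hHρ : H ρ ≤ K_H * H (σ ^ k * R) :=
    hHai.2 ⟨hρ.le, hρR.trans hRR₀⟩ (hmemIcc k) hk1
  -- put everything together
  have hHR : 0 ≤ H R := hH0 R ⟨hR.le, hRR₀⟩
  have hHk' := hHk k
  have hb' : (0:ℝ) < b⁻¹ := by positivity
  calc H ρ ≤ K_H * H (σ ^ k * R) := hHρ
    _ ≤ K_H * (K * (F (σ ^ k * R) / F R) * H R + B * M * F (σ ^ k * R)) :=
        mul_le_mul_of_nonneg_left hHk' (by linarith)
    _ ≤ K_H * (K * ((K * b⁻¹ * F ρ) / F R) * H R + B * M * (K * b⁻¹ * F ρ)) := by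
        apply mul_le_mul_of_nonneg_left _ (by linarith : (0:ℝ) ≤ K_H)
        apply add_le_add
        · apply mul_le_mul_of_nonneg_right _ hHR
          apply mul_le_mul_of_nonneg_left _ (by linarith : (0:ℝ) ≤ K)
          exact (div_le_div_iff_of_pos_right hFR).mpr hFkρ
        · exact mul_le_mul_of_nonneg_left hFkρ (by positivity)
    _ ≤ K_H * K * b⁻¹ * (K + M) * (F ρ / F R) * H R
        + K_H * K * b⁻¹ * (K + M) * B * F ρ := by
        have h1 : (0:ℝ) ≤ F ρ / F R * H R := mul_nonneg (by positivity) hHR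
        have h2 : (0:ℝ) ≤ B * F ρ := by positivity
        have hP : (0:ℝ) ≤ K_H * K * b⁻¹ := by positivity
        have e1 : K_H * K * b⁻¹ * K ≤ K_H * K * b⁻¹ * (K + M) :=
          mul_le_mul_of_nonneg_left (by linarith) hP
        have e2 : K_H * K * b⁻¹ * M ≤ K_H * K * b⁻¹ * (K + M) :=
          mul_le_mul_of_nonneg_left (by linarith) hP
        calc K_H * (K * ((K * b⁻¹ * F ρ) / F R) * H R + B * M * (K * b⁻¹ * F ρ))
            = (K_H * K * b⁻¹ * K) * (F ρ / F R * H R)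
              + (K_H * K * b⁻¹ * M) * (B * F ρ) := by ring
          _ ≤ (K_H * K * b⁻¹ * (K + M)) * (F ρ / F R * H R)
              + (K_H * K * b⁻¹ * (K + M)) * (B * F ρ) :=
            add_le_add (mul_le_mul_of_nonneg_right e1 h1)
              (mul_le_mul_of_nonneg_right e2 h2)
          _ = K_H * K * b⁻¹ * (K + M) * (F ρ / F R) * H R
              + K_H * K * b⁻¹ * (K + M) * B * F ρ := by ring
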